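/- Let q ≥ 1 and t ≥ 1 be integers. The number of functions f : Fin q → Fin t such that every fiber f⁻¹(c) has even cardinality is at most ⌊q/2⌋^{q+1} · t^{⌊q/2⌋}. -/

import Mathlib

/-- The number of functions `f : Fin q → Fin t` all of whose fibers have even
cardinality is at most `⌊q/2⌋^(q+1) · t^⌊q/2⌋`. -/
theorem count_even_fiber_functions (q t : ℕ) (hq : 1 ≤ q) (ht : 1 ≤ t) :
    (Finset.univ.filter
        (fun f : Fin q → Fin t =>
          ∀ c : Fin t, Even ((Finset.univ.filter (fun x => f x = c)).card))).card
      ≤ (q / 2) ^ (q + 1) * t ^ (q / 2) := by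
  classical
  set m := q / 2 with hm
  -- every f in the set has Even q
  have key : ∀ f : Fin q → Fin t,
      (∀ c : Fin t, Even ((Finset.univ.filter (fun x => f x = c)).card)) →
      q = ∑ c : Fin t, ((Finset.univ.filter (fun x => f x = c)).card) := by
    intro f _
    have := Finset.card_eq_sum_card_fiberwise
      (f := f) (s := (Finset.univ : Finset (Fin q))) (t := Finset.univ) (by simp)
    simpa using this
  by_cases hqe : Even q
  · -- q even, so m ≥ 1
    obtain ⟨k, hk⟩ := hqe
    have hq2 : 2 ≤ q := by omega
    have hm1 : 1 ≤ m := by omega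
    -- the injection
    set S : (Fin q → Fin t) → Finset (Fin t) := fun f => Finset.image f Finset.univ with hS
    set L : (Fin q → Fin t) → List (Fin t) := fun f => (S f).sort (· ≤ ·) with hL
    have hmemL : ∀ f (x : Fin q), f x ∈ L f := by
      intro f x
      rw [hL]
      simp [Finset.mem_sort, hS]
    have hlen : ∀ f : Fin q → Fin t,
        (∀ c : Fin t, Even ((Finset.univ.filter (fun x => f x = c)).card)) →
        (L f).length ≤ m := by
      intro f hf
      have hcard : (L f).length = (S f).card := Finset.length_sort _
      rw [hcard]
      -- each color in S f has fiber of size ≥ 2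
      have h2 : ∀ c ∈ S f, 2 ≤ (Finset.univ.filter (fun x => f x = c)).card := by
        intro c hc
        obtain ⟨x, _, hx⟩ := Finset.mem_image.mp hc
        have hpos : 0 < (Finset.univ.filter (fun x => f x = c)).card := by
          apply Finset.card_pos.mpr ⟨x, by simp [hx]⟩
        obtain ⟨j, hj⟩ := hf c
        omega
      have hsum : ∑ c ∈ S f, ((Finset.univ.filter (fun x => f x = c)).card) ≤ q :=
        le_of_le_of_eq (Finset.sum_le_sum_of_subset (Finset.subset_univ _)) (key f hf).symm
      have h2c : (S f).card * 2 ≤ ∑ c ∈ S f, ((Finset.univ.filter (fun x => f x = c)).card) := by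
        calc (S f).card * 2 = ∑ _c ∈ S f, 2 := by rw [Finset.sum_const, smul_eq_mul, mul_comm]
          _ ≤ _ := Finset.sum_le_sum h2
      omega
    set Φ : (Fin q → Fin t) → ((Fin q → Fin m) × (Fin m → Fin t)) := fun f =>
      (fun x => ⟨min ((L f).idxOf (f x)) (m - 1), by omega⟩,
       fun i => (L f).getD i ⟨0, ht⟩) with hΦ
    have hrecover : ∀ f : Fin q → Fin t,
        (∀ c : Fin t, Even ((Finset.univ.filter (fun x => f x = c)).card)) →
        ∀ x, (Φ f).2 ((Φ f).1 x) = f x := by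
      intro f hf x
      have hmem := hmemL f x
      have hidx : (L f).idxOf (f x) < (L f).length := List.idxOf_lt_length_iff.mpr hmem
      have hle := hlen f hf
      have hminx : min ((L f).idxOf (f x)) (m - 1) = (L f).idxOf (f x) := by omega
      simp only [hΦ]
      rw [hminx, List.getD_eq_getElem _ _ hidx, List.getElem_idxOf hidx]
    calc (Finset.univ.filter
        (fun f : Fin q → Fin t =>
          ∀ c : Fin t, Even ((Finset.univ.filter (fun x => f x = c)).card))).card
        ≤ (Finset.univ : Finset ((Fin q → Fin m) × (Fin m → Fin t))).card := by
          apply Finset.card_le_card_of_injOn Φ (fun _ _ => Finset.mem_univ _)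
          intro f hf g hg hfg
          rw [Finset.mem_coe, Finset.mem_filter] at hf hg
          funext x
          rw [← hrecover f hf.2 x, ← hrecover g hg.2 x, hfg]
      _ = m ^ q * t ^ m := by
          simp [Finset.card_univ]
      _ ≤ m ^ (q + 1) * t ^ m :=
          Nat.mul_le_mul_right _ (Nat.pow_le_pow_right hm1 (by omega))
  · -- q odd: the set is empty
    have : (Finset.univ.filter
        (fun f : Fin q → Fin t =>
          ∀ c : Fin t, Even ((Finset.univ.filter (fun x => f x = c)).card))).card = 0 := by
      rw [Finset.card_eq_zero, Finset.filter_eq_empty_iff]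
      intro f _
      intro hf
      apply hqe
      have h1 : Even (∑ c : Fin t, ((Finset.univ.filter (fun x => f x = c)).card)) :=
        Finset.even_sum _ (fun c _ => hf c)
      exact key f hf ▸ h1
    rw [this]
    exact Nat.zero_le _
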